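/- Fix a, ε > 0. Then Φ(a, ε, x)/x tends to L(a, ε) as x → 0⁺; equivalently, the right derivative of x ↦ Φ(a, ε, x) at x = 0 equals L(a, ε). -/

import Mathlib

noncomputable section

/-- The two-level entropy functional
`Φ(a,ε,x) = λ₊ log λ₊ + λ₋ log λ₋ − a log a − ε log ε`, where
`λ± = (a + ε ± √((a−ε)² + 4x))/2` (with `0 log 0 = 0` via `Real.log 0 = 0`). -/
def Phi (a ε x : ℝ) : ℝ :=
  ((a + ε + Real.sqrt ((a - ε) ^ 2 + 4 * x)) / 2) *
      Real.log ((a + ε + Real.sqrt ((a - ε) ^ 2 + 4 * x)) / 2) +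
    ((a + ε - Real.sqrt ((a - ε) ^ 2 + 4 * x)) / 2) *
      Real.log ((a + ε - Real.sqrt ((a - ε) ^ 2 + 4 * x)) / 2) -
    a * Real.log a - ε * Real.log ε

/-- The inverse logarithmic mean `L(a,c)`. -/
def Lmean (a c : ℝ) : ℝ :=
  if a = c then 1 / a else (Real.log a - Real.log c) / (a - c)

open Real Filter Set in
lemma Phi_comm (a ε : ℝ) : Phi a ε = Phi ε a := by
  funext x
  have h : (a - ε) ^ 2 = (ε - a) ^ 2 := by ring
  simp only [Phi, h]
  ring

lemma Lmean_comm (a ε : ℝ) (h : a ≠ ε) : Lmean a ε = Lmean ε a := by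
  simp only [Lmean, if_neg h, if_neg h.symm]
  rw [div_eq_div_iff (sub_ne_zero.2 h) (sub_ne_zero.2 h.symm)]
  ring

lemma Phi_zero (a ε : ℝ) (hε : 0 ≤ ε) (h : ε ≤ a) : Phi a ε 0 = 0 := by
  have h1 : (a - ε) ^ 2 + 4 * 0 = (a - ε) ^ 2 := by ring
  have h2 : Real.sqrt ((a - ε) ^ 2) = a - ε := Real.sqrt_sq (by linarith)
  have h3 : (a + ε + (a - ε)) / 2 = a := by ring
  have h4 : (a + ε - (a - ε)) / 2 = ε := by ring
  simp [Phi, h1, h2, h3, h4]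

/-- The key derivative computation when `ε < a`. -/
lemma hasDerivAt_Phi (a ε : ℝ) (hε : 0 < ε) (h : ε < a) :
    HasDerivAt (Phi a ε) (Lmean a ε) 0 := by
  have hs : (0:ℝ) < a - ε := by linarith
  have hsq : Real.sqrt ((a - ε) ^ 2 + 4 * 0) = a - ε := by
    rw [show (a - ε) ^ 2 + 4 * 0 = (a - ε) ^ 2 by ring, Real.sqrt_sq hs.le]
  have h1 : HasDerivAt (fun x : ℝ => (a - ε) ^ 2 + 4 * x) 4 0 := by
    simpa using ((hasDerivAt_id (0:ℝ)).const_mul 4).const_add ((a - ε) ^ 2)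
  have h2 : HasDerivAt (fun x : ℝ => Real.sqrt ((a - ε) ^ 2 + 4 * x))
      (1 / (2 * (a - ε)) * 4) 0 := by
    have := (Real.hasDerivAt_sqrt (x := (a - ε) ^ 2 + 4 * 0) (by positivity)).comp 0 h1
    simpa [Function.comp_def, show (a - ε) ^ 2 + 4 * 0 = (a-ε)^2 by ring, Real.sqrt_sq hs.le] using this
  have hp : HasDerivAt (fun x : ℝ => (a + ε + Real.sqrt ((a - ε) ^ 2 + 4 * x)) / 2)
      (1 / (2 * (a - ε)) * 4 / 2) 0 := ((h2.const_add (a + ε)).div_const 2)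
  have hm : HasDerivAt (fun x : ℝ => (a + ε - Real.sqrt ((a - ε) ^ 2 + 4 * x)) / 2)
      (-(1 / (2 * (a - ε)) * 4) / 2) 0 := ((h2.const_sub (a + ε)).div_const 2)
  have hpv : (a + ε + Real.sqrt ((a - ε) ^ 2 + 4 * 0)) / 2 = a := by rw [hsq]; ring
  have hmv : (a + ε - Real.sqrt ((a - ε) ^ 2 + 4 * 0)) / 2 = ε := by rw [hsq]; ring
  have hP : HasDerivAt (fun x : ℝ =>
      ((a + ε + Real.sqrt ((a - ε) ^ 2 + 4 * x)) / 2) *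
        Real.log ((a + ε + Real.sqrt ((a - ε) ^ 2 + 4 * x)) / 2))
      ((Real.log a + 1) * (1 / (2 * (a - ε)) * 4 / 2)) 0 := by
    have ha : (0:ℝ) < a := lt_trans hε h
    have hp2 : HasDerivAt (fun x : ℝ => x * Real.log x) (Real.log a + 1)
        ((a + ε + Real.sqrt ((a - ε) ^ 2 + 4 * 0)) / 2) :=
      by rw [hpv]; exact Real.hasDerivAt_mul_log (ne_of_gt ha)
    have := hp2.comp 0 hp
    simpa [Function.comp_def, hpv] using this
  have hM : HasDerivAt (fun x : ℝ =>
      ((a + ε - Real.sqrt ((a - ε) ^ 2 + 4 * x)) / 2) *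
        Real.log ((a + ε - Real.sqrt ((a - ε) ^ 2 + 4 * x)) / 2))
      ((Real.log ε + 1) * (-(1 / (2 * (a - ε)) * 4) / 2)) 0 := by
    have hm2 : HasDerivAt (fun x : ℝ => x * Real.log x) (Real.log ε + 1)
        ((a + ε - Real.sqrt ((a - ε) ^ 2 + 4 * 0)) / 2) :=
      by rw [hmv]; exact Real.hasDerivAt_mul_log (ne_of_gt hε)
    have := hm2.comp 0 hm
    simpa [Function.comp_def, hmv] using this
  have hfinal := ((hP.add hM).sub_const (a * Real.log a)).sub_const (ε * Real.log ε)
  have : (Real.log a + 1) * (1 / (2 * (a - ε)) * 4 / 2) +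
      (Real.log ε + 1) * (-(1 / (2 * (a - ε)) * 4) / 2) = Lmean a ε := by
    rw [Lmean, if_neg (by linarith : a ≠ ε)]
    field_simp
    ring
  rw [this] at hfinal
  exact hfinal

example : True := trivial

/-- The tendsto statement in the case `a = ε`. -/
lemma tendsto_eq_case (a : ℝ) (ha : 0 < a) :
    Filter.Tendsto (fun x : ℝ => Phi a a x / x)
      (nhdsWithin 0 (Set.Ioi 0)) (nhds (1 / a)) := by
  set g : ℝ → ℝ := fun t => (a + t) * Real.log (a + t) + (a - t) * Real.log (a - t)
    - a * Real.log a - a * Real.log a with hg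
  -- step 1 : limit of g t / t^2 as t → 0+
  have key : Filter.Tendsto (fun t : ℝ => g t / t ^ 2)
      (nhdsWithin 0 (Set.Ioi 0)) (nhds (1 / a)) := by
    have hmem : Set.Ioo (0:ℝ) a ∈ nhdsWithin (0:ℝ) (Set.Ioi 0) :=
      Ioo_mem_nhdsGT_of_mem (by constructor <;> simp [ha.le, ha])
    apply HasDerivAt.lhopital_zero_nhdsGT
      (f' := fun t => Real.log (a + t) - Real.log (a - t)) (g' := fun t => 2 * t)
    · filter_upwards [hmem] with t ht
      have h1 : (0:ℝ) < a + t := by linarith [ht.1]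
      have h2 : (0:ℝ) < a - t := by linarith [ht.2]
      have hp : HasDerivAt (fun t : ℝ => (a + t) * Real.log (a + t))
          ((Real.log (a + t) + 1) * 1) t :=
        (Real.hasDerivAt_mul_log h1.ne').comp t ((hasDerivAt_id t).const_add a)
      have hm : HasDerivAt (fun t : ℝ => (a - t) * Real.log (a - t))
          ((Real.log (a - t) + 1) * (-1)) t :=
        (Real.hasDerivAt_mul_log h2.ne').comp t ((hasDerivAt_id t).const_sub a)
      have := ((hp.add hm).sub_const (a * Real.log a)).sub_const (a * Real.log a)
      exact this.congr_deriv (by ring)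
    · filter_upwards with t
      simpa using hasDerivAt_pow 2 t
    · filter_upwards [hmem] with t ht
      have := ht.1
      positivity
    · -- g → 0
      have hc : ContinuousAt g 0 := by
        have h1 : (0:ℝ) < a + 0 := by simpa using ha
        fun_prop (disch := simp [ha.ne', sub_zero])
      have h0 : g 0 = 0 := by simp [hg]
      have := hc.continuousWithinAt (s := Set.Ioi 0)
      rw [ContinuousWithinAt, h0] at this
      exact this
    · have : Filter.Tendsto (fun t : ℝ => t ^ 2) (nhdsWithin 0 (Set.Ioi 0)) (nhds (0 ^ 2)) :=
        ((continuous_pow 2).continuousAt (x := (0:ℝ))).continuousWithinAt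
      simpa using this
    · -- (log(a+t) - log(a-t)) / (2t) → 1/a
      have hD : HasDerivAt (fun t : ℝ => Real.log (a + t) - Real.log (a - t)) (2 / a) 0 := by
        have h1 : HasDerivAt (fun t : ℝ => Real.log (a + t)) (1 / (a + 0)) 0 :=
          (Real.hasDerivAt_log (by simpa using ha.ne')).comp 0
            ((hasDerivAt_id 0).const_add a) |>.congr_deriv (by simp)
        have h2 : HasDerivAt (fun t : ℝ => Real.log (a - t)) (-(1 / (a - 0))) 0 :=
          (Real.hasDerivAt_log (by simpa using ha.ne')).comp 0
            ((hasDerivAt_id 0).const_sub a) |>.congr_deriv (by simp)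
        have := h1.sub h2
        exact this.congr_deriv (by rw [add_zero, sub_zero]; ring)
      have hslope := hD.hasDerivWithinAt (s := Set.Ioi 0)
      rw [hasDerivWithinAt_iff_tendsto_slope] at hslope
      have hsub : nhdsWithin (0:ℝ) (Set.Ioi 0 \ {0}) = nhdsWithin 0 (Set.Ioi 0) := by
        congr 1
        ext t
        simp (config := {contextual := true}) [ne_of_gt]
      rw [hsub] at hslope
      have h2 := hslope.div_const 2
      rw [show (2:ℝ) / a / 2 = 1 / a from by ring] at h2
      refine Filter.Tendsto.congr' ?_ h2
      filter_upwards [self_mem_nhdsWithin] with t (ht : (0:ℝ) < t)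
      simp only [slope_def_field]
      rw [add_zero, sub_zero, sub_zero]
      rw [sub_self, sub_zero, div_div, mul_comm]
  -- step 2: compose with sqrt
  have hsqrt : Filter.Tendsto Real.sqrt (nhdsWithin 0 (Set.Ioi 0))
      (nhdsWithin 0 (Set.Ioi 0)) := by
    rw [tendsto_nhdsWithin_iff]
    constructor
    · have : ContinuousWithinAt Real.sqrt (Set.Ioi 0) 0 :=
        Real.continuous_sqrt.continuousWithinAt
      rw [ContinuousWithinAt, Real.sqrt_zero] at this
      exact this
    · filter_upwards [self_mem_nhdsWithin] with t (ht : (0:ℝ) < t)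
      exact Real.sqrt_pos.2 ht
  have hcomp := key.comp hsqrt
  refine Filter.Tendsto.congr' ?_ hcomp
  filter_upwards [self_mem_nhdsWithin] with x (hx : (0:ℝ) < x)
  have h4 : Real.sqrt ((a - a) ^ 2 + 4 * x) = 2 * Real.sqrt x := by
    rw [show (a - a) ^ 2 + 4 * x = 4 * x by ring, show (4:ℝ) * x = 2 ^ 2 * x by norm_num,
      Real.sqrt_mul (by positivity), Real.sqrt_sq (by norm_num)]
  simp only [Function.comp, Phi, h4, hg]
  rw [Real.sq_sqrt hx.le]
  congr 2 <;> ring_nf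

lemma tendsto_of_lt (a ε : ℝ) (hε : 0 < ε) (h : ε < a) :
    Filter.Tendsto (fun x : ℝ => Phi a ε x / x)
      (nhdsWithin 0 (Set.Ioi 0)) (nhds (Lmean a ε)) := by
  have hD := (hasDerivAt_Phi a ε hε h).hasDerivWithinAt (s := Set.Ioi 0)
  rw [hasDerivWithinAt_iff_tendsto_slope] at hD
  have hsub : nhdsWithin (0:ℝ) (Set.Ioi 0 \ {0}) = nhdsWithin 0 (Set.Ioi 0) := by
    congr 1
    ext t
    simp (config := {contextual := true}) [ne_of_gt]
  rw [hsub] at hD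
  refine Filter.Tendsto.congr' ?_ hD
  filter_upwards [self_mem_nhdsWithin] with t (ht : (0:ℝ) < t)
  simp [slope_def_field, Phi_zero a ε hε.le h.le]

/-- `Φ(a,ε,x)/x → L(a,ε)` as `x → 0⁺`; equivalently the right derivative of
`x ↦ Φ(a,ε,x)` at `0` is `L(a,ε)`. -/
theorem Phi_div_tendsto_Lmean (a ε : ℝ) (ha : 0 < a) (hε : 0 < ε) :
    Filter.Tendsto (fun x : ℝ => Phi a ε x / x)
      (nhdsWithin 0 (Set.Ioi 0)) (nhds (Lmean a ε)) ∧
    HasDerivWithinAt (Phi a ε) (Lmean a ε) (Set.Ici 0) 0 := by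
  have H : Filter.Tendsto (fun x : ℝ => Phi a ε x / x)
      (nhdsWithin 0 (Set.Ioi 0)) (nhds (Lmean a ε)) := by
    rcases lt_trichotomy ε a with h | h | h
    · exact tendsto_of_lt a ε hε h
    · subst h
      simpa [Lmean] using tendsto_eq_case ε hε
    · have := tendsto_of_lt ε a ha h
      rwa [Phi_comm, Lmean_comm ε a (ne_of_gt h)] at this
  refine ⟨H, ?_⟩
  rw [hasDerivWithinAt_iff_tendsto_slope]
  have hIci : Set.Ici (0:ℝ) \ {0} = Set.Ioi 0 := by
    ext t
    simp [lt_iff_le_and_ne, eq_comm]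
  rw [hIci]
  refine Filter.Tendsto.congr' ?_ H
  filter_upwards [self_mem_nhdsWithin] with t (ht : (0:ℝ) < t)
  have hphi0 : Phi a ε 0 = 0 := by
    rcases le_total ε a with h | h
    · exact Phi_zero a ε hε.le h
    · rw [Phi_comm]
      exact Phi_zero ε a ha.le h
  simp [slope_def_field, hphi0]
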